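/- For every slope μ, the full subcategory C^(μ) of C consisting of the zero object and the semistable objects of slope μ is an abelian category, is an exact subcategory of C, and is closed under extensions in C. -/

import Mathlib

open CategoryTheory Limits

universe v u v' u'

variable (C : Type u) [Category.{v} C] [Preadditive C] [HasZeroObject C]
  [HasBinaryBiproducts C]
variable (D : Type u') [Category.{v'} D] [Abelian D]
variable (F : C ⥤ D) [F.Additive] [F.Faithful]
variable (V : Type*) [AddCommGroup V] [LinearOrder V] [IsOrderedAddMonoid V]

/-- The data and axioms of abstract Harder–Narasimhan theory:
an exact structure on `C` (given by its class of short strict exact sequences),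
an exact faithful functor `F : C ⥤ D` inducing bijections between strict
subobjects and subobjects of the image, a rank function on `D` and a degree
function on `C`. -/
structure HNTheory where
  /-- `SSE f g` means `0 ⟶ A ⟶ B ⟶ Z ⟶ 0` is a short strict exact sequence. -/
  SSE : ∀ ⦃A B Z : C⦄, (A ⟶ B) → (B ⟶ Z) → Prop
  sse_comp_zero : ∀ ⦃A B Z : C⦄ (f : A ⟶ B) (g : B ⟶ Z), SSE f g → f ≫ g = 0
  sse_mono : ∀ ⦃A B Z : C⦄ (f : A ⟶ B) (g : B ⟶ Z), SSE f g → Mono f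
  sse_epi : ∀ ⦃A B Z : C⦄ (f : A ⟶ B) (g : B ⟶ Z), SSE f g → Epi g
  sse_isKernel : ∀ ⦃A B Z : C⦄ (f : A ⟶ B) (g : B ⟶ Z) (hfg : SSE f g),
    Nonempty (IsLimit (KernelFork.ofι f (sse_comp_zero f g hfg)))
  sse_isCokernel : ∀ ⦃A B Z : C⦄ (f : A ⟶ B) (g : B ⟶ Z) (hfg : SSE f g),
    Nonempty (IsColimit (CokernelCofork.ofπ g (sse_comp_zero f g hfg)))
  /-- `F` is exact. -/
  F_exact : ∀ ⦃A B Z : C⦄ (f : A ⟶ B) (g : B ⟶ Z) (hfg : SSE f g),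
    (ShortComplex.mk (F.map f) (F.map g)
      (by rw [← F.map_comp, sse_comp_zero f g hfg, F.map_zero])).ShortExact
  /-- `F` induces a bijection between strict subobjects of `X` and subobjects
  of `F(X)`. -/
  strict_sub_bij : ∀ X : C,
    Function.Bijective
      (fun S : {S : Subobject X // ∃ (Z : C) (g : X ⟶ Z), SSE S.arrow g} =>
        imageSubobject (F.map S.1.arrow))
  rk : D → ℕ
  rk_iso : ∀ ⦃X Y : D⦄, (X ≅ Y) → rk X = rk Y
  rk_eq_zero_iff : ∀ X : D, rk X = 0 ↔ IsZero X
  rk_additive : ∀ (S : ShortComplex D), S.ShortExact → rk S.X₂ = rk S.X₁ + rk S.X₃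
  deg : C → V
  deg_iso : ∀ ⦃X Y : C⦄, (X ≅ Y) → deg X = deg Y
  deg_additive : ∀ ⦃A B Z : C⦄ (f : A ⟶ B) (g : B ⟶ Z), SSE f g → deg B = deg A + deg Z
  deg_le_of_FIso : ∀ ⦃X Y : C⦄ (f : X ⟶ Y), IsIso (F.map f) → deg X ≤ deg Y
  deg_eq_iff_of_FIso : ∀ ⦃X Y : C⦄ (f : X ⟶ Y), IsIso (F.map f) → (deg X = deg Y ↔ IsIso f)

namespace HNTheory

variable {C D F V}

/-- The subobject `F(X') ⊆ F(X)` associated to a subobject `X' ⊆ X`. -/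
noncomputable def FSub (_h : HNTheory C D F V) {X : C} (S : Subobject X) :
    Subobject (F.obj X) :=
  imageSubobject (F.map S.arrow)

variable (h : HNTheory C D F V)

/-- The rank of an object of `C` is the rank of its image in `D`. -/
def rkC (X : C) : ℕ := h.rk (F.obj X)

/-- A subobject is strict if it is an admissible (strict) monomorphism,
i.e. fits in a short strict exact sequence. -/
def StrictSub {X : C} (S : Subobject X) : Prop :=
  ∃ (Z : C) (g : X ⟶ Z), h.SSE S.arrow g

/-- `μ(X) ≤ μ(Y)`, in cross-multiplied form `rk(Y) • deg(X) ≤ rk(X) • deg(Y)`. -/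
def muLE (X Y : C) : Prop := h.rkC Y • h.deg X ≤ h.rkC X • h.deg Y

/-- `μ(X) < μ(Y)`, in cross-multiplied form. -/
def muLT (X Y : C) : Prop := h.rkC Y • h.deg X < h.rkC X • h.deg Y

/-- `μ(X) = μ(Y)`, in cross-multiplied form. -/
def muEQ (X Y : C) : Prop := h.rkC Y • h.deg X = h.rkC X • h.deg Y

/-- A nonzero object is semistable if every nonzero proper subobject has
slope at most that of the ambient object. -/
def Semistable (X : C) : Prop :=
  ¬ IsZero X ∧ ∀ S : Subobject X, ¬ IsZero ((S : C)) → S ≠ ⊤ → h.muLE (S : C) X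

/-- A subobject of maximal slope. -/
def MaxSlopeSub {X : C} (S : Subobject X) : Prop :=
  ¬ IsZero ((S : C)) ∧ ∀ T : Subobject X, ¬ IsZero ((T : C)) → h.muLE (T : C) (S : C)

/-- `G` is (a model of) the `i`-th graded piece `c i.succ / c i.castSucc` of a
filtration `c` by strict subobjects. -/
def GrAt {X : C} {N : ℕ} (c : Fin (N + 1) → Subobject X) (i : Fin N) (G : C) : Prop :=
  ∃ (hle : c i.castSucc ≤ c i.succ) (p : ((c i.succ : Subobject X) : C) ⟶ G),
    h.SSE (Subobject.ofLE (c i.castSucc) (c i.succ) hle) p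

/-- `c` is a Harder–Narasimhan filtration. -/
def IsHNFilt {X : C} {N : ℕ} (c : Fin (N + 1) → Subobject X) : Prop :=
  StrictMono c ∧ c 0 = ⊥ ∧ c (Fin.last N) = ⊤ ∧ (∀ i, h.StrictSub (c i)) ∧
  (∀ (i : Fin N) (G : C), h.GrAt c i G → h.Semistable G) ∧
  (∀ (i j : Fin N), i < j → ∀ (Gi Gj : C),
    h.GrAt c i Gi → h.GrAt c j Gj → h.muLT Gj Gi)

end HNTheory

namespace HNTheory
variable {C D F V}
/-- The objects of `C^(μ)`: the zero objects together with the semistable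
objects of slope `μ = d / r`. -/
def SSOfSlope (h : HNTheory C D F V) (d : V) (r : ℕ) : C → Prop :=
  fun X => IsZero X ∨ (h.Semistable X ∧ r • h.deg X = h.rkC X • d)
end HNTheory

namespace HNTheory

variable {C D F V}

section DHelpers

lemma image_le_kernel_of_comp_zero {P Q R : D} {f : P ⟶ Q} {g : Q ⟶ R} (w : f ≫ g = 0) :
    imageSubobject f ≤ kernelSubobject g :=
  imageSubobject_le f (factorThruKernelSubobject g f w) (by simp)

lemma comp_eq_zero_of_image_le {P Q R : D} {f : P ⟶ Q} {g : Q ⟶ R}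
    (hle : imageSubobject f ≤ kernelSubobject g) : f ≫ g = 0 := by
  rw [← imageSubobject_arrow_comp f, Category.assoc]
  have e : (imageSubobject f).arrow ≫ g =
      (Subobject.ofLE _ _ hle) ≫ ((kernelSubobject g).arrow ≫ g) := by
    rw [← Category.assoc, Subobject.ofLE_arrow]
  rw [e, kernelSubobject_arrow_comp, comp_zero, comp_zero]

lemma mono_of_kernelSubobject_eq_bot {P Q : D} {g : P ⟶ Q}
    (hk : kernelSubobject g = ⊥) : Mono g := by
  refine Preadditive.mono_of_cancel_zero _ (fun {W} t ht => ?_)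
  have hfac : (kernelSubobject g).Factors t := kernelSubobject_factors _ t ht
  rw [hk] at hfac
  have := Subobject.factorThru_arrow _ t hfac
  rw [Subobject.bot_arrow, comp_zero] at this
  exact this.symm

lemma epi_of_imageSubobject_comp_eq {P Q R : D} (f : P ⟶ Q) (m : Q ⟶ R) [Mono m]
    (heq : imageSubobject (f ≫ m) = imageSubobject m) : Epi f := by
  have e1 : factorThruImageSubobject (f ≫ m) ≫ (imageSubobject (f ≫ m)).arrow = f ≫ m :=
    imageSubobject_arrow_comp _
  set φ : (imageSubobject (f ≫ m) : D) ⟶ Q :=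
    (Subobject.isoOfEq _ _ (heq.trans (imageSubobject_mono m))).hom ≫
      (Subobject.underlyingIso m).hom with hφ
  haveI : IsIso φ := by rw [hφ]; infer_instance
  have hφm : φ ≫ m = (imageSubobject (f ≫ m)).arrow := by
    rw [hφ, Category.assoc, Subobject.underlyingIso_hom_comp_eq_mk]
    simp
  have : f = factorThruImageSubobject (f ≫ m) ≫ φ := by
    rw [← cancel_mono m, Category.assoc, hφm, e1]
  rw [this]
  exact epi_comp _ _

lemma mono_of_epi_of_kernel_le {P Q R : D} (p : P ⟶ Q) {g : Q ⟶ R} [Epi p]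
    (hle : kernelSubobject (p ≫ g) ≤ kernelSubobject p) : Mono g := by
  have comm : pullback.fst (kernel.ι g) p ≫ kernel.ι g = pullback.snd (kernel.ι g) p ≫ p :=
    pullback.condition
  have h1 : pullback.snd (kernel.ι g) p ≫ (p ≫ g) = 0 := by
    rw [← Category.assoc, ← comm, Category.assoc, kernel.condition, comp_zero]
  have h2 : pullback.snd (kernel.ι g) p ≫ p = 0 := by
    have hfac := kernelSubobject_factors (p ≫ g) _ h1
    have := Subobject.factorThru_arrow _ _ hfac
    rw [← this, Category.assoc]
    have e : (kernelSubobject (p ≫ g)).arrow ≫ p =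
        Subobject.ofLE _ _ hle ≫ ((kernelSubobject p).arrow ≫ p) := by
      rw [← Category.assoc, Subobject.ofLE_arrow]
    rw [e, kernelSubobject_arrow_comp, comp_zero, comp_zero]
  have h3 : pullback.fst (kernel.ι g) p ≫ kernel.ι g = 0 := by rw [comm, h2]
  have h4 : pullback.fst (kernel.ι g) p = 0 := by
    rw [← cancel_mono (kernel.ι g), h3, zero_comp]
  haveI : Epi (pullback.fst (kernel.ι g) p) := Abelian.epi_pullback_of_epi_g _ _
  have hz : IsZero (kernel g) := IsZero.of_epi_eq_zero _ h4
  refine Preadditive.mono_of_cancel_zero _ (fun {W} t ht => ?_)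
  have : kernel.lift g t ht ≫ kernel.ι g = t := kernel.lift_ι _ _ _
  rw [← this, hz.eq_zero_of_tgt (kernel.lift g t ht), zero_comp]

end DHelpers

variable (h : HNTheory C D F V)

lemma isZero_F_iff (X : C) : IsZero (F.obj X) ↔ IsZero X := by
  rw [IsZero.iff_id_eq_zero, IsZero.iff_id_eq_zero]
  constructor
  · intro hz
    apply F.map_injective
    rw [F.map_id, F.map_zero, hz]
  · intro hz
    rw [← F.map_id, hz, F.map_zero]

lemma rkC_eq_zero_iff (X : C) : h.rkC X = 0 ↔ IsZero X :=
  (h.rk_eq_zero_iff _).trans (isZero_F_iff X)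

lemma rkC_pos {X : C} (hX : ¬ IsZero X) : 0 < h.rkC X :=
  Nat.pos_of_ne_zero (fun hz => hX ((h.rkC_eq_zero_iff X).mp hz))

lemma rkC_iso {X Y : C} (e : X ≅ Y) : h.rkC X = h.rkC Y := h.rk_iso (F.mapIso e)

lemma rkC_FIso {X Y : C} (f : X ⟶ Y) (hf : IsIso (F.map f)) : h.rkC X = h.rkC Y :=
  h.rk_iso (@asIso _ _ _ _ _ hf)

section SSEFacts

variable {A B Z : C} {f : A ⟶ B} {g : B ⟶ Z}

lemma sse_F_mono (hfg : h.SSE f g) : Mono (F.map f) := (h.F_exact f g hfg).mono_f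
lemma sse_F_epi (hfg : h.SSE f g) : Epi (F.map g) := (h.F_exact f g hfg).epi_g
lemma sse_image_eq_kernel (hfg : h.SSE f g) :
    imageSubobject (F.map f) = kernelSubobject (F.map g) :=
  (ShortComplex.exact_iff_image_eq_kernel _).mp (h.F_exact f g hfg).exact
lemma sse_rk (hfg : h.SSE f g) : h.rkC B = h.rkC A + h.rkC Z :=
  h.rk_additive _ (h.F_exact f g hfg)

end SSEFacts

lemma F_comp_zero {X Y Z : C} {f : X ⟶ Y} {g : Y ⟶ Z}
    (hle : imageSubobject (F.map f) ≤ kernelSubobject (F.map g)) : f ≫ g = 0 :=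
  F.map_injective (by rw [F.map_comp, comp_eq_zero_of_image_le hle, F.map_zero])

lemma exists_strict (X : C) (G : Subobject (F.obj X)) :
    ∃ S : Subobject X, (∃ (Z : C) (g : X ⟶ Z), h.SSE S.arrow g) ∧
      imageSubobject (F.map S.arrow) = G := by
  obtain ⟨S, hS⟩ := (h.strict_sub_bij X).2 G
  exact ⟨S.1, S.2, hS⟩

lemma deg_zero {X : C} (hX : IsZero X) : h.deg X = 0 := by
  obtain ⟨S, ⟨Z, g, sse⟩, -⟩ := h.exists_strict X ⊥
  haveI := h.sse_mono _ _ sse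
  have hSz : IsZero ((S : Subobject X) : C) := IsZero.of_mono S.arrow hX
  have hZz : IsZero Z := by
    have h1 := h.sse_rk sse
    have h2 : h.rkC X = 0 := (h.rkC_eq_zero_iff X).mpr hX
    rw [h2] at h1
    exact (h.rkC_eq_zero_iff Z).mp (by omega)
  have hd := h.deg_additive _ _ sse
  rw [h.deg_iso (hSz.iso hX), h.deg_iso (hZz.iso hX)] at hd
  exact (left_eq_add.mp hd)

include h in
lemma F_mono {S X : C} (s : S ⟶ X) [Mono s] : Mono (F.map s) := by
  obtain ⟨K, ⟨Z, g, sse⟩, hK⟩ := h.exists_strict S (kernelSubobject (F.map s))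
  have h0 : K.arrow ≫ s = 0 := F_comp_zero (F := F) (le_of_eq hK)
  have hKz : IsZero (K : C) := by
    have : K.arrow = 0 := by rw [← cancel_mono s, h0, zero_comp]
    exact IsZero.of_mono_eq_zero _ this
  have hbot : kernelSubobject (F.map s) = ⊥ := by
    rw [← hK]
    have hz : F.map K.arrow = 0 := ((isZero_F_iff (F := F) _).mpr hKz).eq_zero_of_src _
    rw [hz, imageSubobject_zero]
  exact mono_of_kernelSubobject_eq_bot hbot

lemma strict_le {X : C} {S T : Subobject X} {Z : C} {g : X ⟶ Z} (hT : h.SSE T.arrow g)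
    (hle : imageSubobject (F.map S.arrow) ≤ imageSubobject (F.map T.arrow)) : S ≤ T := by
  have h0 : S.arrow ≫ g = 0 :=
    F_comp_zero (F := F) (hle.trans (le_of_eq (h.sse_image_eq_kernel hT)))
  obtain ⟨lim⟩ := h.sse_isKernel T.arrow g hT
  obtain ⟨l, hl⟩ := KernelFork.IsLimit.lift' lim S.arrow h0
  exact Subobject.le_of_comm l (by simpa using hl)

include h in
lemma exists_fac {A B : C} (f : A ⟶ B) :
    ∃ (K Z B' W : C) (k : K ⟶ A) (p : A ⟶ Z) (fbar : Z ⟶ B) (i : B' ⟶ B) (q : B ⟶ W)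
      (w : Z ⟶ B'),
      h.SSE k p ∧ h.SSE i q ∧ p ≫ fbar = f ∧ w ≫ i = fbar ∧
      Mono (F.map fbar) ∧ IsIso (F.map w) ∧
      (∃ (hkf : k ≫ f = 0), Nonempty (IsLimit (KernelFork.ofι k hkf))) ∧
      (∃ (hfq : f ≫ q = 0), Nonempty (IsColimit (CokernelCofork.ofπ q hfq))) := by
  obtain ⟨Ks, ⟨Z, p, sseK⟩, hKimg⟩ := h.exists_strict A (kernelSubobject (F.map f))
  obtain ⟨Bs, ⟨W, q, sseB⟩, hBimg⟩ := h.exists_strict B (imageSubobject (F.map f))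
  haveI := h.sse_mono _ _ sseK
  haveI := h.sse_epi _ _ sseK
  haveI := h.sse_mono _ _ sseB
  haveI := h.sse_epi _ _ sseB
  haveI := h.sse_F_mono sseK
  haveI := h.sse_F_epi sseK
  haveI := h.sse_F_mono sseB
  haveI := h.sse_F_epi sseB
  obtain ⟨limK⟩ := h.sse_isKernel _ _ sseK
  obtain ⟨colimK⟩ := h.sse_isCokernel _ _ sseK
  obtain ⟨limB⟩ := h.sse_isKernel _ _ sseB
  obtain ⟨colimB⟩ := h.sse_isCokernel _ _ sseB
  have hkf : Ks.arrow ≫ f = 0 := F_comp_zero (F := F) (le_of_eq hKimg)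
  have hfq : f ≫ q = 0 := by
    apply F_comp_zero (F := F)
    rw [← hBimg, h.sse_image_eq_kernel sseB]
  obtain ⟨fbar, hfbar⟩ := CokernelCofork.IsColimit.desc' colimK f hkf
  rw [Cofork.π_ofπ] at hfbar
  have hmonoF : Mono (F.map fbar) := by
    apply mono_of_epi_of_kernel_le (F.map p)
    have e : F.map p ≫ F.map fbar = F.map f := by rw [← F.map_comp, hfbar]
    rw [e, ← hKimg, h.sse_image_eq_kernel sseK]
  haveI := hmonoF
  haveI : Mono fbar := F.mono_of_mono_map hmonoF
  have hpfq : p ≫ fbar ≫ q = 0 := by rw [← Category.assoc, hfbar, hfq]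
  have hfbq : fbar ≫ q = 0 := by
    apply F.map_injective
    rw [F.map_zero]
    apply zero_of_epi_comp (F.map p)
    rw [← F.map_comp, hpfq, F.map_zero]
  obtain ⟨w, hw⟩ := KernelFork.IsLimit.lift' limB fbar hfbq
  rw [Fork.ι_ofι] at hw
  obtain ⟨f', hf'⟩ := KernelFork.IsLimit.lift' limB f hfq
  rw [Fork.ι_ofι] at hf'
  have hepiF : Epi (F.map f') := by
    apply epi_of_imageSubobject_comp_eq (F.map f') (F.map Bs.arrow)
    rw [← F.map_comp, hf']
    exact hBimg.symm
  have hwepi : Epi (F.map w) := by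
    have e : f' = p ≫ w := by
      rw [← cancel_mono Bs.arrow, hf', Category.assoc, hw, hfbar]
    have e2 : F.map f' = F.map p ≫ F.map w := by rw [← F.map_comp, e]
    rw [e2] at hepiF
    exact epi_of_epi (F.map p) (F.map w)
  have hwmono : Mono (F.map w) := by
    have e : F.map w ≫ F.map Bs.arrow = F.map fbar := by rw [← F.map_comp, hw]
    have : Mono (F.map w ≫ F.map Bs.arrow) := by rw [e]; exact hmonoF
    exact mono_of_mono (F.map w) (F.map Bs.arrow)
  haveI := hwepi
  haveI := hwmono
  have hwiso : IsIso (F.map w) := isIso_of_mono_of_epi _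
  have hker : Nonempty (IsLimit (KernelFork.ofι Ks.arrow hkf)) := by
    constructor
    apply KernelFork.IsLimit.ofι' Ks.arrow hkf
    intro T t ht
    have htp : t ≫ p = 0 := by
      rw [← cancel_mono fbar, Category.assoc, hfbar, zero_comp, ht]
    refine ⟨(KernelFork.IsLimit.lift' limK t htp).1, ?_⟩
    simpa using (KernelFork.IsLimit.lift' limK t htp).2
  have hcoker : Nonempty (IsColimit (CokernelCofork.ofπ q hfq)) := by
    constructor
    apply CokernelCofork.IsColimit.ofπ' q hfq
    intro T t ht
    have h2 : f' ≫ Bs.arrow ≫ t = 0 := by rw [← Category.assoc, hf', ht]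
    have hit : Bs.arrow ≫ t = 0 := by
      apply F.map_injective
      rw [F.map_zero]
      apply zero_of_epi_comp (F.map f')
      rw [← F.map_comp, h2, F.map_zero]
    refine ⟨(CokernelCofork.IsColimit.desc' colimB t hit).1, ?_⟩
    simpa using (CokernelCofork.IsColimit.desc' colimB t hit).2
  exact ⟨_, Z, _, W, Ks.arrow, p, fbar, Bs.arrow, q, w, sseK, sseB, hfbar, hw, hmonoF,
    hwiso, ⟨hkf, hker⟩, ⟨hfq, hcoker⟩⟩

include h in
lemma exists_strict_image {S X : C} (s : S ⟶ X) [Mono s] :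
    ∃ (S' Xq : C) (a : S' ⟶ X) (pS : X ⟶ Xq) (u : S ⟶ S'),
      h.SSE a pS ∧ u ≫ a = s ∧ IsIso (F.map u) := by
  obtain ⟨S', ⟨Xq, pS, sse⟩, himg⟩ := h.exists_strict X (imageSubobject (F.map s))
  haveI := h.sse_mono _ _ sse
  haveI := h.sse_F_mono sse
  haveI : Mono (F.map s) := h.F_mono s
  have h0 : s ≫ pS = 0 := by
    apply F_comp_zero (F := F)
    rw [← himg, h.sse_image_eq_kernel sse]
  obtain ⟨lim⟩ := h.sse_isKernel _ _ sse
  obtain ⟨u, hu⟩ := KernelFork.IsLimit.lift' lim s h0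
  rw [Fork.ι_ofι] at hu
  have humono : Mono (F.map u) := by
    have e : F.map u ≫ F.map S'.arrow = F.map s := by rw [← F.map_comp, hu]
    have : Mono (F.map u ≫ F.map S'.arrow) := by rw [e]; infer_instance
    exact mono_of_mono (F.map u) (F.map S'.arrow)
  have huepi : Epi (F.map u) := by
    apply epi_of_imageSubobject_comp_eq (F.map u) (F.map S'.arrow)
    rw [← F.map_comp, hu]
    exact himg.symm
  haveI := humono; haveI := huepi
  exact ⟨_, Xq, S'.arrow, pS, u, sse, hu, isIso_of_mono_of_epi _⟩


lemma nsmul_le_cancel {n : ℕ} (hn : 0 < n) {a b : V} (hab : n • a ≤ n • b) : a ≤ b :=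
  (smul_le_smul_iff_of_pos_left hn).mp hab

variable (d : V) (r : ℕ)

lemma slope_zero {X : C} (hX : IsZero X) : r • h.deg X = h.rkC X • d := by
  have h1 : h.rkC X = 0 := (h.rkC_eq_zero_iff X).mpr hX
  rw [h.deg_zero hX, h1, smul_zero, zero_smul]

lemma muLE_of_semistable {X S' : C} (hX : h.Semistable X) (s : S' ⟶ X) [Mono s]
    (hS : ¬ IsZero S') : h.muLE S' X := by
  set T := Subobject.mk s with hTdef
  have e : (T : C) ≅ S' := Subobject.underlyingIso s
  by_cases hT : T = ⊤
  · haveI : IsIso T.arrow := by rw [hT]; infer_instance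
    have e2 : S' ≅ X := e.symm ≪≫ asIso T.arrow
    show h.rkC X • h.deg S' ≤ h.rkC S' • h.deg X
    rw [h.deg_iso e2, h.rkC_iso e2]
  · have hTz : ¬ IsZero ((T : Subobject X) : C) := fun hz => hS (hz.of_iso e.symm)
    have hmu := hX.2 T hTz hT
    show h.rkC X • h.deg S' ≤ h.rkC S' • h.deg X
    rw [show h.deg S' = h.deg ((T : Subobject X) : C) from (h.deg_iso e).symm,
      show h.rkC S' = h.rkC ((T : Subobject X) : C) from (h.rkC_iso e).symm]
    exact hmu

lemma slopeLE_of_muLE (hr : 0 < r) {X S : C} (hXnz : ¬ IsZero X)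
    (hsl : r • h.deg X = h.rkC X • d) (hmu : h.muLE S X) :
    r • h.deg S ≤ h.rkC S • d := by
  have hx := h.rkC_pos hXnz
  apply nsmul_le_cancel (V := V) hx
  calc h.rkC X • (r • h.deg S) = r • (h.rkC X • h.deg S) := smul_comm _ _ _
    _ ≤ r • (h.rkC S • h.deg X) := (smul_le_smul_iff_of_pos_left hr).mpr hmu
    _ = h.rkC S • (r • h.deg X) := smul_comm _ _ _
    _ = h.rkC S • (h.rkC X • d) := by rw [hsl]
    _ = h.rkC X • (h.rkC S • d) := smul_comm _ _ _

lemma muLE_of_slopeLE (hr : 0 < r) {X S : C} (hXnz : ¬ IsZero X)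
    (hsl : r • h.deg X = h.rkC X • d) (hS : r • h.deg S ≤ h.rkC S • d) :
    h.muLE S X := by
  have hx := h.rkC_pos hXnz
  show h.rkC X • h.deg S ≤ h.rkC S • h.deg X
  apply nsmul_le_cancel (V := V) hr
  calc r • (h.rkC X • h.deg S) = h.rkC X • (r • h.deg S) := smul_comm _ _ _
    _ ≤ h.rkC X • (h.rkC S • d) := (smul_le_smul_iff_of_pos_left hx).mpr hS
    _ = h.rkC S • (h.rkC X • d) := smul_comm _ _ _
    _ = h.rkC S • (r • h.deg X) := by rw [hsl]
    _ = r • (h.rkC S • h.deg X) := smul_comm _ _ _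

lemma slopeLE_of_mono (hr : 0 < r) {X S : C} (hX : h.SSOfSlope d r X) (s : S ⟶ X) [Mono s] :
    r • h.deg S ≤ h.rkC S • d := by
  by_cases hS : IsZero S
  · exact le_of_eq (h.slope_zero d r hS)
  rcases hX with hX0 | ⟨hss, hsl⟩
  · exact absurd (IsZero.of_mono s hX0) hS
  exact h.slopeLE_of_muLE d r hr hss.1 hsl (h.muLE_of_semistable hss s hS)


section SlopeAdd

variable {A B Z : C} {f : A ⟶ B} {g : B ⟶ Z}

lemma slope_e1 (sse : h.SSE f g) (hB : r • h.deg B = h.rkC B • d) :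
    r • h.deg A + r • h.deg Z = h.rkC A • d + h.rkC Z • d := by
  rw [← smul_add, ← h.deg_additive _ _ sse, hB, h.sse_rk sse, add_smul]

lemma slope_sub_right (sse : h.SSE f g) (hB : r • h.deg B = h.rkC B • d)
    (hA : r • h.deg A ≤ h.rkC A • d) : h.rkC Z • d ≤ r • h.deg Z := by
  have e1 := h.slope_e1 d r sse hB
  have h2 : h.rkC A • d + h.rkC Z • d ≤ h.rkC A • d + r • h.deg Z := by
    rw [← e1]; exact add_le_add_left hA _
  exact le_of_add_le_add_left h2

lemma slope_sub_left (sse : h.SSE f g) (hB : r • h.deg B = h.rkC B • d)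
    (hZ : h.rkC Z • d ≤ r • h.deg Z) : r • h.deg A ≤ h.rkC A • d := by
  have e1 := h.slope_e1 d r sse hB
  have h2 : r • h.deg A + h.rkC Z • d ≤ h.rkC A • d + h.rkC Z • d :=
    calc r • h.deg A + h.rkC Z • d ≤ r • h.deg A + r • h.deg Z := add_le_add_right hZ _
      _ = _ := e1
  exact le_of_add_le_add_right h2

lemma slope_eq_left (sse : h.SSE f g) (hB : r • h.deg B = h.rkC B • d)
    (hZ : r • h.deg Z = h.rkC Z • d) : r • h.deg A = h.rkC A • d := by
  have e1 := h.slope_e1 d r sse hB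
  rw [hZ] at e1
  exact add_right_cancel e1

lemma slope_eq_right (sse : h.SSE f g) (hB : r • h.deg B = h.rkC B • d)
    (hA : r • h.deg A = h.rkC A • d) : r • h.deg Z = h.rkC Z • d := by
  have e1 := h.slope_e1 d r sse hB
  rw [hA] at e1
  exact add_left_cancel e1

lemma slope_add_le (sse : h.SSE f g) (hA : r • h.deg A ≤ h.rkC A • d)
    (hZ : r • h.deg Z ≤ h.rkC Z • d) : r • h.deg B ≤ h.rkC B • d := by
  rw [h.deg_additive _ _ sse, h.sse_rk sse, smul_add, add_smul]
  exact add_le_add hA hZ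

lemma slope_add_eq (sse : h.SSE f g) (hA : r • h.deg A = h.rkC A • d)
    (hZ : r • h.deg Z = h.rkC Z • d) : r • h.deg B = h.rkC B • d := by
  rw [h.deg_additive _ _ sse, h.sse_rk sse, smul_add, add_smul, hA, hZ]

end SlopeAdd

lemma ssOfSlope_iso {X Y : C} (e : X ≅ Y) (hX : h.SSOfSlope d r X) : h.SSOfSlope d r Y := by
  rcases hX with h0 | ⟨⟨hnz, hsub⟩, hsl⟩
  · exact Or.inl (h0.of_iso e.symm)
  refine Or.inr ⟨⟨fun hz => hnz (hz.of_iso e), fun T hT htop => ?_⟩,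
    by rw [← h.deg_iso e, ← h.rkC_iso e]; exact hsl⟩
  haveI : Mono (T.arrow ≫ e.inv) := mono_comp _ _
  have hmu : h.muLE ((T : Subobject Y) : C) X :=
    h.muLE_of_semistable ⟨hnz, hsub⟩ (T.arrow ≫ e.inv) hT
  show h.rkC Y • h.deg _ ≤ h.rkC _ • h.deg Y
  rw [← h.rkC_iso e, ← h.deg_iso e]
  exact hmu

include h in
lemma slopeLE_quot (hr : 0 < r) {B' B W S : C} {i : B' ⟶ B} {q : B ⟶ W}
    (sseB : h.SSE i q) (hB : h.SSOfSlope d r B) (hWeq : r • h.deg W = h.rkC W • d)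
    (s : S ⟶ W) [Mono s] : r • h.deg S ≤ h.rkC S • d := by
  by_cases hS0 : IsZero S
  · exact le_of_eq (h.slope_zero d r hS0)
  haveI := h.sse_epi _ _ sseB
  by_cases hB0 : IsZero B
  · exact absurd (IsZero.of_mono s (IsZero.of_epi q hB0)) hS0
  obtain ⟨hssB, hslB⟩ := hB.resolve_left hB0
  obtain ⟨S', Wq, a, pS, u, sseA, hua, hFu⟩ := h.exists_strict_image s
  haveI := h.sse_mono _ _ sseA
  haveI := h.sse_epi _ _ sseA
  suffices hS' : r • h.deg S' ≤ h.rkC S' • d by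
    calc r • h.deg S ≤ r • h.deg S' :=
        (smul_le_smul_iff_of_pos_left hr).mpr (h.deg_le_of_FIso u hFu)
      _ ≤ h.rkC S' • d := hS'
      _ = h.rkC S • d := by rw [← h.rkC_FIso u hFu]
  obtain ⟨T, Zt, B2, W2, kt, pt, ζ, i2, q2, w2, sseT, _, hptζ, _, hFζmono, _, _, _⟩ :=
    h.exists_fac (q ≫ pS)
  haveI := h.sse_mono _ _ sseT
  haveI := h.sse_epi _ _ sseT
  haveI := h.sse_F_epi sseB
  haveI := h.sse_F_epi sseA
  haveI : Epi (F.map (q ≫ pS)) := by rw [F.map_comp]; exact epi_comp _ _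
  have hFζepi : Epi (F.map ζ) := by
    have e : F.map pt ≫ F.map ζ = F.map (q ≫ pS) := by rw [← F.map_comp, hptζ]
    have : Epi (F.map pt ≫ F.map ζ) := by rw [e]; infer_instance
    exact epi_of_epi (F.map pt) _
  haveI := hFζmono; haveI := hFζepi
  have hFζiso : IsIso (F.map ζ) := isIso_of_mono_of_epi _
  have hTle : r • h.deg T ≤ h.rkC T • d := h.slopeLE_of_mono d r hr hB kt
  have hZtge : h.rkC Zt • d ≤ r • h.deg Zt := h.slope_sub_right d r sseT hslB hTle
  have hWqge : h.rkC Wq • d ≤ r • h.deg Wq := by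
    calc h.rkC Wq • d = h.rkC Zt • d := by rw [← h.rkC_FIso ζ hFζiso]
      _ ≤ r • h.deg Zt := hZtge
      _ ≤ r • h.deg Wq := (smul_le_smul_iff_of_pos_left hr).mpr (h.deg_le_of_FIso ζ hFζiso)
  exact h.slope_sub_left d r sseA hWeq hWqge

include h in
lemma master (hr : 0 < r) {A B : C} (f : A ⟶ B) (hA : h.SSOfSlope d r A)
    (hB : h.SSOfSlope d r B) :
    ∃ (K Z B' W : C) (k : K ⟶ A) (p : A ⟶ Z) (fbar : Z ⟶ B) (i : B' ⟶ B) (q : B ⟶ W)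
      (w : Z ⟶ B'),
      h.SSE k p ∧ h.SSE i q ∧ p ≫ fbar = f ∧ w ≫ i = fbar ∧ IsIso w ∧
      h.SSOfSlope d r K ∧ h.SSOfSlope d r W ∧
      (∃ (hkf : k ≫ f = 0), Nonempty (IsLimit (KernelFork.ofι k hkf))) ∧
      (∃ (hfq : f ≫ q = 0), Nonempty (IsColimit (CokernelCofork.ofπ q hfq))) := by
  obtain ⟨K, Z, B', W, k, p, fbar, i, q, w, sseK, sseB, hpf, hwi, hFfbar, hFw, hker, hcoker⟩ :=
    h.exists_fac f
  haveI := h.sse_mono _ _ sseK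
  haveI := h.sse_epi _ _ sseK
  haveI := h.sse_mono _ _ sseB
  haveI := h.sse_epi _ _ sseB
  haveI := hFfbar
  haveI : Mono fbar := F.mono_of_mono_map hFfbar
  have hKle : r • h.deg K ≤ h.rkC K • d := h.slopeLE_of_mono d r hr hA k
  have hZge : h.rkC Z • d ≤ r • h.deg Z := by
    by_cases hA0 : IsZero A
    · exact le_of_eq (h.slope_zero d r (IsZero.of_epi p hA0)).symm
    · exact h.slope_sub_right d r sseK ((hA.resolve_left hA0).2) hKle
  have hZle : r • h.deg Z ≤ h.rkC Z • d := h.slopeLE_of_mono d r hr hB fbar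
  have hrkZB : h.rkC Z = h.rkC B' := h.rkC_FIso w hFw
  have hB'le : r • h.deg B' ≤ h.rkC B' • d := h.slopeLE_of_mono d r hr hB i
  have hwiso : IsIso w := by
    by_cases hZ0 : IsZero Z
    · have hB'0 : IsZero B' := by
        have hz : IsZero (F.obj B') :=
          ((isZero_F_iff (F := F) Z).mpr hZ0).of_iso (asIso (F.map w)).symm
        exact (isZero_F_iff (F := F) B').mp hz
      exact ⟨0, hZ0.eq_of_src _ _, hB'0.eq_of_src _ _⟩
    · have hle2 : h.deg B' ≤ h.deg Z := by
        apply nsmul_le_cancel (V := V) hr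
        calc r • h.deg B' ≤ h.rkC B' • d := hB'le
          _ = h.rkC Z • d := by rw [hrkZB]
          _ ≤ r • h.deg Z := hZge
      exact (h.deg_eq_iff_of_FIso w hFw).mp (le_antisymm (h.deg_le_of_FIso w hFw) hle2)
  have hKmem : h.SSOfSlope d r K := by
    by_cases hK0 : IsZero K
    · exact Or.inl hK0
    have hA0 : ¬ IsZero A := fun hz => hK0 (IsZero.of_mono k hz)
    obtain ⟨hssA, hslA⟩ := hA.resolve_left hA0
    have hZeq : r • h.deg Z = h.rkC Z • d := le_antisymm hZle hZge
    have hKeq : r • h.deg K = h.rkC K • d := h.slope_eq_left d r sseK hslA hZeq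
    refine Or.inr ⟨⟨hK0, fun S hS hStop => ?_⟩, hKeq⟩
    haveI : Mono (S.arrow ≫ k) := mono_comp _ _
    exact h.muLE_of_slopeLE d r hr hK0 hKeq (h.slopeLE_of_mono d r hr hA (S.arrow ≫ k))
  have hWmem : h.SSOfSlope d r W := by
    by_cases hW0 : IsZero W
    · exact Or.inl hW0
    have hB0 : ¬ IsZero B := fun hz => hW0 (IsZero.of_epi q hz)
    obtain ⟨hssB, hslB⟩ := hB.resolve_left hB0
    have hB'ge : h.rkC B' • d ≤ r • h.deg B' := by
      calc h.rkC B' • d = h.rkC Z • d := by rw [hrkZB]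
        _ ≤ r • h.deg Z := hZge
        _ ≤ r • h.deg B' := (smul_le_smul_iff_of_pos_left hr).mpr (h.deg_le_of_FIso w hFw)
    have hB'eq : r • h.deg B' = h.rkC B' • d := le_antisymm hB'le hB'ge
    have hWeq : r • h.deg W = h.rkC W • d := h.slope_eq_right d r sseB hslB hB'eq
    refine Or.inr ⟨⟨hW0, fun S hS hStop => ?_⟩, hWeq⟩
    exact h.muLE_of_slopeLE d r hr hW0 hWeq (h.slopeLE_quot d r hr sseB hB hWeq S.arrow)
  exact ⟨K, Z, B', W, k, p, fbar, i, q, w, sseK, sseB, hpf, hwi, hwiso, hKmem, hWmem,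
    hker, hcoker⟩

include h in
lemma extension (hr : 0 < r) {A B Z : C} {f : A ⟶ B} {g : B ⟶ Z} (sse : h.SSE f g)
    (hA : h.SSOfSlope d r A) (hZ : h.SSOfSlope d r Z) : h.SSOfSlope d r B := by
  haveI := h.sse_mono _ _ sse
  haveI := h.sse_epi _ _ sse
  haveI := h.sse_F_mono sse
  haveI := h.sse_F_epi sse
  by_cases hA0 : IsZero A
  · have hFf0 : F.map f = 0 := ((isZero_F_iff (F := F) A).mpr hA0).eq_zero_of_src _
    haveI : Mono (F.map g) := by
      apply mono_of_kernelSubobject_eq_bot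
      rw [← h.sse_image_eq_kernel sse, hFf0, imageSubobject_zero]
    have hFgiso : IsIso (F.map g) := isIso_of_mono_of_epi _
    have hdeg : h.deg B = h.deg Z := by
      rw [h.deg_additive _ _ sse, h.deg_zero hA0, zero_add]
    have : IsIso g := (h.deg_eq_iff_of_FIso g hFgiso).mp hdeg
    exact h.ssOfSlope_iso d r (asIso g).symm hZ
  by_cases hZ0 : IsZero Z
  · have hg0 : g = 0 := hZ0.eq_zero_of_tgt g
    obtain ⟨lim⟩ := h.sse_isKernel _ _ sse
    obtain ⟨l, hl⟩ := KernelFork.IsLimit.lift' lim (𝟙 B)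
      (by rw [Category.id_comp, hg0])
    rw [Fork.ι_ofι] at hl
    have hfl : f ≫ l = 𝟙 A := by
      rw [← cancel_mono f, Category.assoc, hl, Category.comp_id, Category.id_comp]
    have : IsIso f := ⟨l, hfl, hl⟩
    exact h.ssOfSlope_iso d r (asIso f) hA
  obtain ⟨hssA, hslA⟩ := hA.resolve_left hA0
  obtain ⟨hssZ, hslZ⟩ := hZ.resolve_left hZ0
  have hB0 : ¬ IsZero B := fun hz => hA0 (IsZero.of_mono f hz)
  have hslB : r • h.deg B = h.rkC B • d := h.slope_add_eq d r sse hslA hslZ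
  refine Or.inr ⟨⟨hB0, fun S hS hStop => ?_⟩, hslB⟩
  apply h.muLE_of_slopeLE d r hr hB0 hslB
  obtain ⟨K, Q, B2, W2, k, pq, gbar, i2, q2, w2, sseS, _, hpg, _, hFgbar, _, ⟨hk0, _⟩, _⟩ :=
    h.exists_fac (S.arrow ≫ g)
  haveI := h.sse_mono _ _ sseS
  haveI := hFgbar
  haveI : Mono gbar := F.mono_of_mono_map hFgbar
  obtain ⟨lim⟩ := h.sse_isKernel _ _ sse
  obtain ⟨u, hu⟩ := KernelFork.IsLimit.lift' lim (k ≫ S.arrow)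
    (by rw [Category.assoc, hk0])
  rw [Fork.ι_ofι] at hu
  haveI : Mono u := by
    have : Mono (u ≫ f) := by rw [hu]; exact mono_comp _ _
    exact mono_of_mono u f
  have hKle := h.slopeLE_of_mono d r hr hA u
  have hQle := h.slopeLE_of_mono d r hr hZ gbar
  exact h.slope_add_le d r sseS hKle hQle

include h in
lemma biprod_mem (hr : 0 < r) {X Y : C} (hX : h.SSOfSlope d r X) (hY : h.SSOfSlope d r Y) :
    h.SSOfSlope d r (X ⊞ Y) := by
  obtain ⟨S, ⟨Z, g, sse⟩, himg⟩ :=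
    h.exists_strict (X ⊞ Y) (imageSubobject (F.map (biprod.inl : X ⟶ X ⊞ Y)))
  haveI := h.sse_mono _ _ sse
  haveI := h.sse_epi _ _ sse
  haveI := h.sse_F_mono sse
  haveI := h.sse_F_epi sse
  have hsnd : S.arrow ≫ (biprod.snd : X ⊞ Y ⟶ Y) = 0 := by
    apply F_comp_zero (F := F)
    rw [himg]
    apply image_le_kernel_of_comp_zero
    rw [← F.map_comp, biprod.inl_snd, F.map_zero]
  have hlinl : (S.arrow ≫ biprod.fst) ≫ biprod.inl = S.arrow := by
    calc (S.arrow ≫ biprod.fst) ≫ biprod.inl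
        = S.arrow ≫ biprod.fst ≫ biprod.inl + S.arrow ≫ biprod.snd ≫ biprod.inr := by
          rw [← Category.assoc S.arrow biprod.snd biprod.inr, hsnd, zero_comp, add_zero,
            Category.assoc]
      _ = S.arrow ≫ (biprod.fst ≫ biprod.inl + biprod.snd ≫ biprod.inr) := by
          rw [Preadditive.comp_add]
      _ = S.arrow := by rw [biprod.total, Category.comp_id]
  have hinlg : (biprod.inl : X ⟶ X ⊞ Y) ≫ g = 0 := by
    apply F_comp_zero (F := F)
    rw [← h.sse_image_eq_kernel sse, himg]
  obtain ⟨lim⟩ := h.sse_isKernel _ _ sse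
  obtain ⟨m, hm⟩ := KernelFork.IsLimit.lift' lim biprod.inl hinlg
  rw [Fork.ι_ofι] at hm
  have hml : m ≫ (S.arrow ≫ biprod.fst) = 𝟙 X := by
    rw [← cancel_mono (biprod.inl : X ⟶ X ⊞ Y), Category.assoc, hlinl, hm, Category.id_comp]
  have hlm : (S.arrow ≫ biprod.fst) ≫ m = 𝟙 ((S : Subobject (X ⊞ Y)) : C) := by
    rw [← cancel_mono S.arrow, Category.assoc, hm, hlinl, Category.id_comp]
  have eS : ((S : Subobject (X ⊞ Y)) : C) ≅ X := ⟨S.arrow ≫ biprod.fst, m, hlm, hml⟩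
  obtain ⟨colim⟩ := h.sse_isCokernel _ _ sse
  obtain ⟨z, hz⟩ := CokernelCofork.IsColimit.desc' colim biprod.snd hsnd
  rw [Cofork.π_ofπ] at hz
  have hinrg : ((biprod.inr : Y ⟶ X ⊞ Y) ≫ g) ≫ z = 𝟙 Y := by
    rw [Category.assoc, hz, biprod.inr_snd]
  have hFzepi : Epi (F.map z) := by
    have e : F.map g ≫ F.map z = F.map (biprod.snd : X ⊞ Y ⟶ Y) := by rw [← F.map_comp, hz]
    have he : Epi (F.map g ≫ F.map z) := by rw [e]; infer_instance
    exact @epi_of_epi _ _ _ _ _ _ _ he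
  have hsplit : imageSubobject (F.map (biprod.inl : X ⟶ X ⊞ Y)) =
      kernelSubobject (F.map (biprod.snd : X ⊞ Y ⟶ Y)) := by
    have w0 : F.map (biprod.inl : X ⟶ X ⊞ Y) ≫ F.map (biprod.snd : X ⊞ Y ⟶ Y) = 0 := by
      rw [← F.map_comp, biprod.inl_snd, F.map_zero]
    have spl : (ShortComplex.mk _ _ w0).Splitting :=
      { r := F.map biprod.fst
        s := F.map biprod.inr
        f_r := by rw [← F.map_comp, biprod.inl_fst, F.map_id]
        s_g := by rw [← F.map_comp, biprod.inr_snd, F.map_id]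
        id := by
          rw [← F.map_comp, ← F.map_comp, ← F.map_add, biprod.total, F.map_id] }
    exact (ShortComplex.exact_iff_image_eq_kernel _).mp spl.exact
  have hFzmono : Mono (F.map z) := by
    apply mono_of_epi_of_kernel_le (F.map g)
    have e : F.map g ≫ F.map z = F.map (biprod.snd : X ⊞ Y ⟶ Y) := by rw [← F.map_comp, hz]
    rw [e, ← hsplit, ← himg, h.sse_image_eq_kernel sse]
  haveI := hFzmono; haveI := hFzepi
  have hFziso : IsIso (F.map z) := isIso_of_mono_of_epi _
  have hFinrg : IsIso (F.map ((biprod.inr : Y ⟶ X ⊞ Y) ≫ g)) := by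
    have hcomp : F.map ((biprod.inr : Y ⟶ X ⊞ Y) ≫ g) ≫ F.map z = 𝟙 _ := by
      rw [← F.map_comp, hinrg, F.map_id]
    have ha : F.map ((biprod.inr : Y ⟶ X ⊞ Y) ≫ g) = inv (F.map z) := by
      calc F.map ((biprod.inr : Y ⟶ X ⊞ Y) ≫ g)
          = F.map ((biprod.inr : Y ⟶ X ⊞ Y) ≫ g) ≫ F.map z ≫ inv (F.map z) := by
            rw [IsIso.hom_inv_id, Category.comp_id]
        _ = (F.map ((biprod.inr : Y ⟶ X ⊞ Y) ≫ g) ≫ F.map z) ≫ inv (F.map z) := by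
            rw [Category.assoc]
        _ = inv (F.map z) := by rw [hcomp, Category.id_comp]
    rw [ha]; infer_instance
  have hdegZ : h.deg Z = h.deg Y :=
    le_antisymm (h.deg_le_of_FIso z hFziso) (h.deg_le_of_FIso _ hFinrg)
  have hziso : IsIso z := (h.deg_eq_iff_of_FIso z hFziso).mp hdegZ
  have hSmem : h.SSOfSlope d r ((S : Subobject (X ⊞ Y)) : C) := h.ssOfSlope_iso d r eS.symm hX
  have hZmem : h.SSOfSlope d r Z :=
    h.ssOfSlope_iso d r (@asIso _ _ _ _ z hziso).symm hY
  exact h.extension d r hr sse hSmem hZmem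

end HNTheory
/-- (4.12) For every slope `μ = d / r`, the full subcategory `C^(μ)` of
semistable objects of slope `μ` (together with zero) is abelian, is an exact
subcategory of `C` (kernels and cokernels of morphisms between its objects,
computed in `C`, again lie in it), and is closed under extensions in `C`. -/
theorem stmt14 (h : HNTheory C D F V) (d : V) (r : ℕ) (hr : 0 < r) :
    Nonempty (Abelian (ObjectProperty.FullSubcategory (h.SSOfSlope d r))) ∧
    (∀ ⦃A B Z : C⦄ (f : A ⟶ B) (g : B ⟶ Z), h.SSE f g →
      h.SSOfSlope d r A → h.SSOfSlope d r Z → h.SSOfSlope d r B) ∧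
    (∀ ⦃A B : C⦄, h.SSOfSlope d r A → h.SSOfSlope d r B → ∀ (f : A ⟶ B),
      (∀ (K : C) (k : K ⟶ A) (hk : k ≫ f = 0),
        Nonempty (IsLimit (KernelFork.ofι k hk)) → h.SSOfSlope d r K) ∧
      (∀ (Q : C) (q : B ⟶ Q) (hq : f ≫ q = 0),
        Nonempty (IsColimit (CokernelCofork.ofπ q hq)) → h.SSOfSlope d r Q)) := by
  refine ⟨?_, ?_, ?_⟩
  · constructor
    haveI hzo : HasZeroObject (ObjectProperty.FullSubcategory (h.SSOfSlope d r)) := by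
      obtain ⟨O, hO⟩ := HasZeroObject.zero (C := C)
      refine ⟨⟨⟨O, Or.inl hO⟩, ?_⟩⟩
      rw [IsZero.iff_id_eq_zero]
      ext
      exact hO.eq_of_src _ _
    haveI hk : HasKernels (ObjectProperty.FullSubcategory (h.SSOfSlope d r)) := by
      constructor
      intro X Y f
      obtain ⟨K, Z, B', W, k, p, fbar, i, q, w, sseK, sseB, hpf, hwi, hwiso, hKmem, hWmem,
        ⟨hkf, ⟨limf⟩⟩, _⟩ := h.master d r hr f.hom X.2 Y.2
      haveI := h.sse_mono _ _ sseK
      apply HasLimit.mk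
      let KA : ObjectProperty.FullSubcategory (h.SSOfSlope d r) := ⟨K, hKmem⟩
      let kA : KA ⟶ X := ObjectProperty.homMk k
      have hkfA : kA ≫ f = 0 := by ext; exact hkf
      refine ⟨KernelFork.ofι kA hkfA, ?_⟩
      haveI : Mono kA := ⟨fun {T} g g' e => by
        ext; exact (cancel_mono k).mp (congrArg (fun x => x.hom) e)⟩
      apply KernelFork.IsLimit.ofι'
      intro T t ht
      refine ⟨ObjectProperty.homMk
        (KernelFork.IsLimit.lift' limf t.hom (congrArg (fun x => x.hom) ht)).1, ?_⟩
      ext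
      exact (KernelFork.IsLimit.lift' limf t.hom (congrArg (fun x => x.hom) ht)).2
    haveI hck : HasCokernels (ObjectProperty.FullSubcategory (h.SSOfSlope d r)) := by
      constructor
      intro X Y f
      obtain ⟨K, Z, B', W, k, p, fbar, i, q, w, sseK, sseB, hpf, hwi, hwiso, hKmem, hWmem,
        _, ⟨hfq, ⟨colimf⟩⟩⟩ := h.master d r hr f.hom X.2 Y.2
      haveI := h.sse_epi _ _ sseB
      apply HasColimit.mk
      let WA : ObjectProperty.FullSubcategory (h.SSOfSlope d r) := ⟨W, hWmem⟩
      let qA : Y ⟶ WA := ObjectProperty.homMk q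
      have hfqA : f ≫ qA = 0 := by ext; exact hfq
      refine ⟨CokernelCofork.ofπ qA hfqA, ?_⟩
      haveI : Epi qA := ⟨fun {T} g g' e => by
        ext; exact (cancel_epi q).mp (congrArg (fun x => x.hom) e)⟩
      apply CokernelCofork.IsColimit.ofπ'
      intro T t ht
      refine ⟨ObjectProperty.homMk
        (CokernelCofork.IsColimit.desc' colimf t.hom (congrArg (fun x => x.hom) ht)).1, ?_⟩
      ext
      exact (CokernelCofork.IsColimit.desc' colimf t.hom (congrArg (fun x => x.hom) ht)).2
    haveI hbp : ∀ (X Y : ObjectProperty.FullSubcategory (h.SSOfSlope d r)), HasLimit (pair X Y) := by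
      intro X Y
      apply HasLimit.mk
      let PA : ObjectProperty.FullSubcategory (h.SSOfSlope d r) := ⟨X.obj ⊞ Y.obj, h.biprod_mem d r hr X.2 Y.2⟩
      let fstA : PA ⟶ X := ObjectProperty.homMk (biprod.fst : X.obj ⊞ Y.obj ⟶ X.obj)
      let sndA : PA ⟶ Y := ObjectProperty.homMk (biprod.snd : X.obj ⊞ Y.obj ⟶ Y.obj)
      refine ⟨BinaryFan.mk fstA sndA, ?_⟩
      refine BinaryFan.isLimitMk (fun s => ObjectProperty.homMk
          (biprod.lift s.fst.hom s.snd.hom : s.pt.obj ⟶ X.obj ⊞ Y.obj))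
        ?_ ?_ ?_
      · intro s; ext; exact biprod.lift_fst _ _
      · intro s; ext; exact biprod.lift_snd _ _
      · intro s m h1 h2
        apply ObjectProperty.hom_ext
        apply biprod.hom_ext
        · exact (congrArg (fun x => x.hom) h1).trans (biprod.lift_fst _ _).symm
        · exact (congrArg (fun x => x.hom) h2).trans (biprod.lift_snd _ _).symm
    haveI : HasBinaryProducts (ObjectProperty.FullSubcategory (h.SSOfSlope d r)) :=
      hasBinaryProducts_of_hasLimit_pair _
    haveI : HasFiniteProducts (ObjectProperty.FullSubcategory (h.SSOfSlope d r)) :=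
      hasFiniteProducts_of_has_binary_and_terminal
    haveI hnm : IsNormalMonoCategory (ObjectProperty.FullSubcategory (h.SSOfSlope d r)) := by
      refine ⟨fun {X Y} f hfm => ?_⟩
      obtain ⟨K, Z, B', W, k, p, fbar, i, q, w, sseK, sseB, hpf, hwi, hwiso, hKmem, hWmem,
        ⟨hkf, _⟩, ⟨hfq, _⟩⟩ := h.master d r hr f.hom X.2 Y.2
      haveI := h.sse_mono _ _ sseK
      haveI := h.sse_epi _ _ sseK
      haveI := h.sse_mono _ _ sseB
      haveI := h.sse_epi _ _ sseB
      haveI := hfm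
      have hk0 : k = 0 := by
        have e0 : (ObjectProperty.homMk k :
            (⟨K, hKmem⟩ : ObjectProperty.FullSubcategory (h.SSOfSlope d r)) ⟶ X) ≫ f = 0 ≫ f := by
          rw [zero_comp]; ext; exact hkf
        exact congrArg (fun x => x.hom) ((cancel_mono f).mp e0)
      have hKz : IsZero K := IsZero.of_mono_eq_zero k hk0
      haveI : Mono (F.map p) := by
        apply HNTheory.mono_of_kernelSubobject_eq_bot
        rw [← h.sse_image_eq_kernel sseK]
        have e1 : F.map k = 0 := ((HNTheory.isZero_F_iff (F := F) K).mpr hKz).eq_zero_of_src _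
        rw [e1, imageSubobject_zero]
      haveI := h.sse_F_epi sseK
      have hFpiso : IsIso (F.map p) := isIso_of_mono_of_epi _
      have hdegp : h.deg X.obj = h.deg Z := by
        rw [h.deg_additive _ _ sseK, h.deg_zero hKz, zero_add]
      have hpiso : IsIso p := (h.deg_eq_iff_of_FIso p hFpiso).mp hdegp
      haveI := hpiso
      haveI := hwiso
      have hfac : (p ≫ w) ≫ i = f.hom := by rw [Category.assoc, hwi, hpf]
      haveI : IsIso (p ≫ w) := inferInstance
      obtain ⟨limB⟩ := h.sse_isKernel _ _ sseB
      constructor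
      refine { Z := ⟨W, hWmem⟩, g := ObjectProperty.homMk q, w := ObjectProperty.hom_ext _ hfq, isLimit := ?_ }
      apply KernelFork.IsLimit.ofι'
      intro T t ht
      obtain ⟨t₁, ht₁⟩ := KernelFork.IsLimit.lift' limB t.hom (congrArg (fun x => x.hom) ht)
      rw [Fork.ι_ofι] at ht₁
      refine ⟨ObjectProperty.homMk (t₁ ≫ inv (p ≫ w) : T.obj ⟶ X.obj), ?_⟩
      ext
      show (t₁ ≫ inv (p ≫ w)) ≫ f.hom = t.hom
      rw [← hfac, Category.assoc, IsIso.inv_hom_id_assoc, ht₁]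
    haveI hne : IsNormalEpiCategory (ObjectProperty.FullSubcategory (h.SSOfSlope d r)) := by
      refine ⟨fun {X Y} f hfe => ?_⟩
      obtain ⟨K, Z, B', W, k, p, fbar, i, q, w, sseK, sseB, hpf, hwi, hwiso, hKmem, hWmem,
        ⟨hkf, _⟩, ⟨hfq, _⟩⟩ := h.master d r hr f.hom X.2 Y.2
      haveI := h.sse_mono _ _ sseK
      haveI := h.sse_epi _ _ sseK
      haveI := h.sse_mono _ _ sseB
      haveI := h.sse_epi _ _ sseB
      haveI := hfe
      have hq0 : q = 0 := by
        have e0 : f ≫ (ObjectProperty.homMk q :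
            Y ⟶ (⟨W, hWmem⟩ : ObjectProperty.FullSubcategory (h.SSOfSlope d r))) = f ≫ 0 := by
          rw [comp_zero]; ext; exact hfq
        exact congrArg (fun x => x.hom) ((cancel_epi f).mp e0)
      have hWz : IsZero W := IsZero.of_epi_eq_zero q hq0
      obtain ⟨limB⟩ := h.sse_isKernel _ _ sseB
      obtain ⟨l, hl⟩ := KernelFork.IsLimit.lift' limB (𝟙 Y.obj)
        (by rw [Category.id_comp]; exact hWz.eq_zero_of_tgt q)
      rw [Fork.ι_ofι] at hl
      have hil : i ≫ l = 𝟙 B' := by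
        rw [← cancel_mono i, Category.assoc, hl, Category.comp_id, Category.id_comp]
      haveI : IsIso i := ⟨l, hil, hl⟩
      haveI := hwiso
      have hfac : p ≫ (w ≫ i) = f.hom := by rw [hwi, hpf]
      haveI : IsIso (w ≫ i) := inferInstance
      obtain ⟨colimK⟩ := h.sse_isCokernel _ _ sseK
      constructor
      refine { W := ⟨K, hKmem⟩, g := ObjectProperty.homMk k, w := ObjectProperty.hom_ext _ hkf, isColimit := ?_ }
      apply CokernelCofork.IsColimit.ofπ'
      intro T t ht
      obtain ⟨t₁, ht₁⟩ := CokernelCofork.IsColimit.desc' colimK t.hom (congrArg (fun x => x.hom) ht)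
      rw [Cofork.π_ofπ] at ht₁
      refine ⟨ObjectProperty.homMk (inv (w ≫ i) ≫ t₁ : Y.obj ⟶ T.obj), ?_⟩
      ext
      have e2 : (f.hom ≫ (inv (w ≫ i) ≫ t₁) : X.obj ⟶ T.obj) = (t.hom : X.obj ⟶ T.obj) := by
        rw [← hfac, Category.assoc, IsIso.hom_inv_id_assoc, ht₁]
      exact e2
    exact { toPreadditive := inferInstance
            toIsNormalMonoCategory := hnm
            toIsNormalEpiCategory := hne }
  · intro A B Z f g sse hA hZ
    exact h.extension d r hr sse hA hZ
  · intro A B hA hB f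
    obtain ⟨K₀, Z₀, B₀, W₀, k₀, p₀, fbar₀, i₀, q₀, w₀, sseK, sseB, hpf, hwi, hwiso,
      hKmem, hWmem, ⟨hkf, ⟨lim₀⟩⟩, ⟨hfq, ⟨colim₀⟩⟩⟩ := h.master d r hr f hA hB
    constructor
    · rintro K k hk ⟨lim'⟩
      have e : K ≅ K₀ := IsLimit.conePointUniqueUpToIso lim' lim₀
      exact h.ssOfSlope_iso d r e.symm hKmem
    · rintro Q q hq ⟨colim'⟩
      have e : W₀ ≅ Q := IsColimit.coconePointUniqueUpToIso colim₀ colim'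
      exact h.ssOfSlope_iso d r e hWmem
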